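/- arXiv:1703.02169 — 2 statements merged into one kernel-verified Lean document; each statement's English description precedes it below -/
import Mathlib

section
/- Let $H$ and $T$ be independent exponential random variables with means $1-\beta$ and $\beta$ respectively, where $\beta \in (0,1)$. For positive constants $P_1, P_2, D, S$ with $P_1 > P_2 D$, we have $\mathbb{P}\left[\frac{H P_1}{H P_2 + T(P_1+P_2) + S} < D\right] = 1 - \frac{(1-\beta)(P_1 - P_2 D)}{\beta D (P_1+P_2) + (1-\beta)(P_1 - P_2 D)}\exp\left(-\frac{D S}{(1-\beta)(P_1-P_2 D)}\right)$. -/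
open Real MeasureTheory ProbabilityTheory

section StmtAux
open Set

lemma exp_aux_withDensity (r : ℝ) :
    expMeasure r = volume.withDensity (exponentialPDF r) := rfl

lemma exp_aux_Iio_zero (r : ℝ) : expMeasure r (Set.Iio 0) = 0 := by
  rw [exp_aux_withDensity, withDensity_apply _ measurableSet_Iio]
  exact lintegral_exponentialPDF_of_nonpos le_rfl

lemma exp_aux_Ici {r c : ℝ} (hr : 0 < r) (hc : 0 ≤ c) :
    expMeasure r (Set.Ici c) = ENNReal.ofReal (exp (-(r * c))) := by
  haveI := isProbabilityMeasure_expMeasure hr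
  have hIic : expMeasure r (Set.Iic c) = ENNReal.ofReal (1 - exp (-(r * c))) := by
    rw [exp_aux_withDensity, withDensity_apply _ measurableSet_Iic,
      lintegral_exponentialPDF_eq_antiDeriv hr, if_pos hc]
  have hpt : expMeasure r {c} = 0 := by
    rw [exp_aux_withDensity]
    exact (withDensity_absolutelyContinuous _ _) (measure_singleton c)
  have hIio : expMeasure r (Set.Iio c) = ENNReal.ofReal (1 - exp (-(r * c))) := by
    rw [← hIic]
    refine le_antisymm (measure_mono Set.Iio_subset_Iic_self) ?_
    calc expMeasure r (Set.Iic c) = expMeasure r (Set.Iio c ∪ {c}) := by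
          rw [Set.Iio_union_right]
      _ ≤ expMeasure r (Set.Iio c) + expMeasure r {c} := measure_union_le _ _
      _ = expMeasure r (Set.Iio c) := by rw [hpt, add_zero]
  have h1 : 0 ≤ 1 - exp (-(r * c)) := by
    have : exp (-(r * c)) ≤ 1 := exp_le_one_iff.mpr (neg_nonpos.mpr (mul_nonneg hr.le hc))
    linarith
  rw [← Set.compl_Iio, measure_compl measurableSet_Iio (measure_ne_top _ _),
    measure_univ, hIio]
  rw [← ENNReal.ofReal_one, ← ENNReal.ofReal_sub 1 h1]
  norm_num

lemma exp_aux_integral {k : ℝ} (hk : 0 < k) :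
    ∫ x in Set.Ioi (0:ℝ), exp (-(k * x)) = 1 / k := by
  have := integral_comp_mul_left_Ioi (fun x => exp (-x)) 0 hk
  simp only [mul_zero, integral_exp_neg_Ioi, neg_zero, exp_zero, smul_eq_mul, mul_one] at this
  rw [this, one_div]

lemma exp_aux_lintegral {r c d : ℝ} (hr : 0 < r) (hc : 0 < c) (hd : 0 ≤ d) :
    ∫⁻ t, ENNReal.ofReal (exp (-(c * t + d))) ∂(expMeasure r)
      = ENNReal.ofReal (r / (c + r) * exp (-d)) := by
  have hg : Measurable fun t : ℝ => ENNReal.ofReal (rexp (-(c * t + d))) := by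
    apply Measurable.ennreal_ofReal; fun_prop
  rw [exp_aux_withDensity,
    lintegral_withDensity_eq_lintegral_mul _ (show Measurable (exponentialPDF r) from (measurable_exponentialPDFReal r).ennreal_ofReal) hg]
  have hsplit := (lintegral_add_compl
    (fun t => (exponentialPDF r * fun t => ENNReal.ofReal (rexp (-(c * t + d)))) t)
    (measurableSet_Ici (a := (0:ℝ))) (μ := volume)).symm
  rw [hsplit, Set.compl_Ici]
  have h0 : ∫⁻ t in Set.Iio 0,
      (exponentialPDF r * fun t => ENNReal.ofReal (rexp (-(c * t + d)))) t = 0 := by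
    rw [setLIntegral_congr_fun_ae (g := fun _ => (0:ENNReal)) measurableSet_Iio
      (ae_of_all _ (fun t (ht : t < 0) => by
        simp [exponentialPDF_of_neg ht]))]
    simp
  rw [h0, add_zero,
    setLIntegral_congr (Filter.EventuallyEq.symm (Ioi_ae_eq_Ici (a := (0:ℝ))))]
  have hptw : ∫⁻ t in Set.Ioi 0,
      (exponentialPDF r * fun t => ENNReal.ofReal (rexp (-(c * t + d)))) t
      = ∫⁻ t in Set.Ioi 0, ENNReal.ofReal (r * rexp (-d) * rexp (-((c + r) * t))) := by
    apply setLIntegral_congr_fun_ae measurableSet_Ioi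
    refine ae_of_all _ (fun t (ht : 0 < t) => ?_)
    simp only [Pi.mul_apply, exponentialPDF_of_nonneg ht.le]
    rw [← ENNReal.ofReal_mul (by positivity)]
    congr 1
    rw [mul_assoc, mul_assoc, ← exp_add, ← exp_add]
    have : -(r * t) + -(c * t + d) = -d + -((c + r) * t) := by ring
    rw [this]
  rw [hptw]
  have hint : IntegrableOn (fun t => r * rexp (-d) * rexp (-((c + r) * t))) (Set.Ioi 0) := by
    simp only [neg_mul_eq_neg_mul]
    exact (exp_neg_integrableOn_Ioi 0 (by positivity)).const_mul _
  rw [← ofReal_integral_eq_lintegral_ofReal hint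
    (ae_of_all _ (fun t => by positivity))]
  rw [MeasureTheory.integral_const_mul, exp_aux_integral (by positivity : (0:ℝ) < c + r)]
  congr 1
  field_simp

lemma exp_aux_ae_nonneg {r : ℝ} : ∀ᵐ t ∂(expMeasure r), 0 ≤ t := by
  refine ae_iff.mpr ?_
  simp only [not_le]
  exact exp_aux_Iio_zero r

end StmtAux

/-- Carol's outage probability under `H₁` (Proposition 2): for independent exponentials
`H` (mean `1-β`) and `T` (mean `β`), with `P₁ > P₂ D`,
`P[H P₁ / (H P₂ + T(P₁+P₂) + S) < D]
 = 1 - ((1-β)(P₁-P₂D))/(βD(P₁+P₂)+(1-β)(P₁-P₂D)) · exp(-DS/((1-β)(P₁-P₂D)))`. -/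
theorem stmt_6 {Ω : Type*} [MeasurableSpace Ω] (μ : Measure Ω) [IsProbabilityMeasure μ]
    (H T : Ω → ℝ) (hHm : Measurable H) (hTm : Measurable T)
    (β P1 P2 D S : ℝ) (hβ : β ∈ Set.Ioo (0:ℝ) 1)
    (hP1 : 0 < P1) (hP2 : 0 < P2) (hD : 0 < D) (hS : 0 < S) (hPD : P2 * D < P1)
    (hH : Measure.map H μ = expMeasure (1 / (1 - β)))
    (hT : Measure.map T μ = expMeasure (1 / β))
    (hindep : IndepFun H T μ) :
    μ {ω | H ω * P1 / (H ω * P2 + T ω * (P1 + P2) + S) < D} =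
      ENNReal.ofReal (1 - ((1 - β) * (P1 - P2 * D)) /
          (β * D * (P1 + P2) + (1 - β) * (P1 - P2 * D)) *
        exp (-(D * S) / ((1 - β) * (P1 - P2 * D)))) := by

  obtain ⟨hβ0, hβ1⟩ := hβ
  have h1β : 0 < 1 - β := by linarith
  have hQ : 0 < P1 - P2 * D := by linarith
  set a := D * (P1 + P2) / (P1 - P2 * D) with ha_def
  set b := D * S / (P1 - P2 * D) with hb_def
  have ha : 0 < a := by positivity
  have hb : 0 < b := by positivity
  -- a.e. nonnegativity of H and T
  have hHae : ∀ᵐ ω ∂μ, 0 ≤ H ω := by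
    refine ae_iff.mpr ?_
    simp only [not_le]
    have : μ (H ⁻¹' Set.Iio 0) = 0 := by
      rw [← Measure.map_apply hHm measurableSet_Iio, hH, exp_aux_Iio_zero]
    exact this
  have hTae : ∀ᵐ ω ∂μ, 0 ≤ T ω := by
    refine ae_iff.mpr ?_
    simp only [not_le]
    have : μ (T ⁻¹' Set.Iio 0) = 0 := by
      rw [← Measure.map_apply hTm measurableSet_Iio, hT, exp_aux_Iio_zero]
    exact this
  -- rewrite the event a.e.
  have hsets : {ω | H ω * P1 / (H ω * P2 + T ω * (P1 + P2) + S) < D}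
      =ᵐ[μ] {ω | H ω < a * T ω + b} := by
    refine Filter.eventuallyEq_set.mpr ?_
    filter_upwards [hHae, hTae] with ω hh ht
    have hden : 0 < H ω * P2 + T ω * (P1 + P2) + S := by
      have h1 := mul_nonneg hh hP2.le
      have h2 := mul_nonneg ht (by linarith : (0:ℝ) ≤ P1 + P2)
      linarith
    rw [div_lt_iff₀ hden,
      show a * T ω + b = (D * (T ω * (P1 + P2)) + D * S) / (P1 - P2 * D) by
        rw [ha_def, hb_def]; field_simp,
      lt_div_iff₀ hQ]
    constructor <;> intro h <;> nlinarith
  rw [measure_congr hsets]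
  -- complement
  have hFm : MeasurableSet {ω | H ω < a * T ω + b} :=
    measurableSet_lt hHm ((hTm.const_mul a).add_const b)
  have hstep : μ {ω | H ω < a * T ω + b}
      = 1 - μ ({ω | H ω < a * T ω + b}ᶜ) := by
    conv_lhs => rw [← compl_compl {ω | H ω < a * T ω + b}]
    rw [prob_compl_eq_one_sub hFm.compl]
  rw [hstep]
  -- compute complement measure via joint law
  have hr1 : 0 < 1 / (1 - β) := by positivity
  have hr2 : 0 < 1 / β := by positivity
  haveI := isProbabilityMeasure_expMeasure hr1
  haveI := isProbabilityMeasure_expMeasure hr2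
  have hA : MeasurableSet {p : ℝ × ℝ | a * p.1 + b ≤ p.2} :=
    measurableSet_le ((measurable_fst.const_mul a).add_const b) measurable_snd
  have hmap : μ.map (fun ω => (T ω, H ω))
      = (expMeasure (1 / β)).prod (expMeasure (1 / (1 - β))) := by
    rw [← hT, ← hH]
    exact (indepFun_iff_map_prod_eq_prod_map_map hTm.aemeasurable hHm.aemeasurable).mp hindep.symm
  have hcompl : μ ({ω | H ω < a * T ω + b}ᶜ)
      = ((expMeasure (1 / β)).prod (expMeasure (1 / (1 - β)))) {p : ℝ × ℝ | a * p.1 + b ≤ p.2} := by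
    have hcc : ({ω | H ω < a * T ω + b}ᶜ : Set Ω)
        = (fun ω => (T ω, H ω)) ⁻¹' {p : ℝ × ℝ | a * p.1 + b ≤ p.2} := by
      ext ω; simp [not_lt]
    rw [hcc, ← Measure.map_apply (hTm.prodMk hHm) hA, hmap]
  rw [hcompl, Measure.prod_apply hA]
  have hcong : ∫⁻ t, expMeasure (1 / (1 - β)) (Prod.mk t ⁻¹' {p : ℝ × ℝ | a * p.1 + b ≤ p.2})
        ∂(expMeasure (1 / β))
      = ∫⁻ t, ENNReal.ofReal (rexp (-((1 / (1 - β) * a) * t + 1 / (1 - β) * b)))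
        ∂(expMeasure (1 / β)) := by
    apply lintegral_congr_ae
    filter_upwards [exp_aux_ae_nonneg] with t ht
    have hpre : Prod.mk t ⁻¹' {p : ℝ × ℝ | a * p.1 + b ≤ p.2} = Set.Ici (a * t + b) := by
      ext h; simp [Set.mem_Ici]
    rw [hpre, exp_aux_Ici hr1 (by positivity : (0:ℝ) ≤ a * t + b)]
    congr 2
    ring
  rw [hcong, exp_aux_lintegral hr2 (by positivity) (by positivity)]
  -- final arithmetic
  have hval : 1 / β / (1 / (1 - β) * a + 1 / β)
      = (1 - β) * (P1 - P2 * D) / (β * D * (P1 + P2) + (1 - β) * (P1 - P2 * D)) := by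
    rw [ha_def]
    have hden : 0 < β * D * (P1 + P2) + (1 - β) * (P1 - P2 * D) := by positivity
    have hQ' : P1 - D * P2 ≠ 0 := by linarith
    field_simp
  have hexp : -(1 / (1 - β) * b) = -(D * S) / ((1 - β) * (P1 - P2 * D)) := by
    rw [hb_def]
    field_simp
  rw [hval, hexp]
  have hx0 : 0 ≤ (1 - β) * (P1 - P2 * D) / (β * D * (P1 + P2) + (1 - β) * (P1 - P2 * D)) *
      rexp (-(D * S) / ((1 - β) * (P1 - P2 * D))) := by positivity
  rw [← ENNReal.ofReal_one, ← ENNReal.ofReal_sub _ hx0]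
end

section
/- Let $\beta \in (0,1)$, and let $P_{ac}, P_{ab}, D, S > 0$ satisfy $P_{ac} > P_{ab} D$. Then the outage probability under $H_1$, $\delta(H_1) = 1 - \frac{(1-\beta)(P_{ac}-P_{ab}D)}{\beta D(P_{ac}+P_{ab}) + (1-\beta)(P_{ac}-P_{ab}D)}\exp\left(-\frac{DS}{(1-\beta)(P_{ac}-P_{ab}D)}\right)$, strictly exceeds the outage probability under $H_0$, $\delta(H_0) = 1 - \frac{1-\beta}{\beta D + (1-\beta)}\exp\left(-\frac{DS}{(1-\beta)P_{ac}}\right)$, when $P_{ab} > 0$. -/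
open Real

/-- Carol's outage probability under `H₁` strictly exceeds that under `H₀`
when the covert power `P_ab` is positive. -/
theorem stmt_8 (β Pac Pab D S : ℝ) (hβ : β ∈ Set.Ioo (0:ℝ) 1)
    (hPac : 0 < Pac) (hPab : 0 < Pab) (hD : 0 < D) (hS : 0 < S)
    (hPD : Pab * D < Pac) :
    1 - (1 - β) / (β * D + (1 - β)) * exp (-(D * S) / ((1 - β) * Pac)) <
      1 - ((1 - β) * (Pac - Pab * D)) /
          (β * D * (Pac + Pab) + (1 - β) * (Pac - Pab * D)) *
        exp (-(D * S) / ((1 - β) * (Pac - Pab * D))) := by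
  obtain ⟨hβ0, hβ1⟩ := hβ
  have h1β : 0 < 1 - β := by linarith
  have hQ : 0 < Pac - Pab * D := by linarith
  have hden0 : 0 < β * D + (1 - β) := by positivity
  have hden1 : 0 < β * D * (Pac + Pab) + (1 - β) * (Pac - Pab * D) := by
    have : 0 < β * D * (Pac + Pab) := by positivity
    nlinarith
  have hA : ((1 - β) * (Pac - Pab * D)) /
      (β * D * (Pac + Pab) + (1 - β) * (Pac - Pab * D)) <
      (1 - β) / (β * D + (1 - β)) := by
    rw [div_lt_div_iff₀ hden1 hden0]
    nlinarith [mul_pos (mul_pos hβ0 hD) (mul_pos h1β (by positivity : (0:ℝ) < Pab + Pab * D))]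
  have hE : exp (-(D * S) / ((1 - β) * (Pac - Pab * D))) <
      exp (-(D * S) / ((1 - β) * Pac)) := by
    apply exp_lt_exp.mpr
    rw [div_lt_div_iff₀ (by positivity) (by positivity)]
    nlinarith [mul_pos (mul_pos hD hS) (mul_pos h1β (by positivity : (0:ℝ) < Pab * D))]
  have := mul_lt_mul'' hA hE (by positivity) (exp_pos _).le
  linarith
end
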